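/- arXiv:2104.08488 — 3 statements merged into one kernel-verified Lean document; each statement's English description precedes it below -/
import Mathlib

section
/- Let H be a Hilbert space (real or complex), A a positive operator on H, ε ∈ [0,1), and x, y ∈ H. Then |⟨x, y⟩_A| ≤ ε‖x‖_A‖y‖_A if and only if ‖x + λy‖_A² ≥ ‖x‖_A² − 2ε‖x‖_A‖λy‖_A for all scalars λ; i.e., x ⊥_A^ε y if and only if x ⊥_{ε(A)} y. -/
noncomputable section

/-- The seminorm induced by a positive operator `A`: `‖x‖_A = √(re ⟪A x, x⟫)`. -/
def anorm {𝕜 H : Type*} [RCLike 𝕜] [NormedAddCommGroup H] [InnerProductSpace 𝕜 H]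
    (A : H →L[𝕜] H) (x : H) : ℝ :=
  Real.sqrt (RCLike.re (inner 𝕜 (A x) x : 𝕜))

/-- The semi-inner product induced by `A`: `⟨x, y⟩_A = ⟪A x, y⟫`. -/
def ainner {𝕜 H : Type*} [RCLike 𝕜] [NormedAddCommGroup H] [InnerProductSpace 𝕜 H]
    (A : H →L[𝕜] H) (x y : H) : 𝕜 :=
  (inner 𝕜 (A x) y : 𝕜)

/-- `T` is `A`-bounded. -/
def IsABounded {𝕜 H : Type*} [RCLike 𝕜] [NormedAddCommGroup H] [InnerProductSpace 𝕜 H]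
    (A T : H →L[𝕜] H) : Prop :=
  ∃ c > 0, ∀ x : H, anorm A (T x) ≤ c * anorm A x

/-- The `A`-norm of an operator `T`: `sup {‖Tx‖_A : ‖x‖_A = 1}`. -/
def opAnorm {𝕜 H : Type*} [RCLike 𝕜] [NormedAddCommGroup H] [InnerProductSpace 𝕜 H]
    (A T : H →L[𝕜] H) : ℝ :=
  sSup {r : ℝ | ∃ x : H, anorm A x = 1 ∧ r = anorm A (T x)}

/-- `(ε,A)`-approximate orthogonality in the sense of Chmieliński, for vectors. -/
def VOrthEps {𝕜 H : Type*} [RCLike 𝕜] [NormedAddCommGroup H] [InnerProductSpace 𝕜 H]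
    (A : H →L[𝕜] H) (ε : ℝ) (x y : H) : Prop :=
  ∀ l : 𝕜, anorm A x ^ 2 - 2 * ε * anorm A x * anorm A (l • y) ≤ anorm A (x + l • y) ^ 2

/-- `(ε,A)`-approximate orthogonality in the sense of Chmieliński, for operators. -/
def OpOrthEps {𝕜 H : Type*} [RCLike 𝕜] [NormedAddCommGroup H] [InnerProductSpace 𝕜 H]
    (A T S : H →L[𝕜] H) (ε : ℝ) : Prop :=
  ∀ l : 𝕜, opAnorm A T ^ 2 - 2 * ε * opAnorm A T * opAnorm A (l • S) ≤ opAnorm A (T + l • S) ^ 2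

end

section AuxLemmas

variable {𝕜 H : Type*} [RCLike 𝕜] [NormedAddCommGroup H] [InnerProductSpace 𝕜 H] [CompleteSpace H]

lemma anorm_smul' (A : H →L[𝕜] H) (l : 𝕜) (z : H) :
    anorm A (l • z) = ‖l‖ * anorm A z := by
  unfold anorm
  rw [map_smul, inner_smul_left, inner_smul_right, ← mul_assoc, RCLike.conj_mul]
  rw [← RCLike.ofReal_pow, RCLike.re_ofReal_mul]
  rw [Real.sqrt_mul (sq_nonneg _), Real.sqrt_sq (norm_nonneg _)]

lemma anorm_add_sq' (A : H →L[𝕜] H) (hA : A.IsPositive) (l : 𝕜) (x y : H) :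
    anorm A (x + l • y) ^ 2
      = anorm A x ^ 2 + 2 * RCLike.re (l * ainner A x y) + ‖l‖ ^ 2 * anorm A y ^ 2 := by
  have hsym := hA.1
  have hsq : ∀ z : H, anorm A z ^ 2 = RCLike.re (inner 𝕜 (A z) z : 𝕜) := fun z =>
    Real.sq_sqrt (hA.2 z)
  rw [hsq, hsq, hsq]
  have h3 : (inner 𝕜 (A (l • y)) x : 𝕜) = starRingEnd 𝕜 (l * (inner 𝕜 (A x) y : 𝕜)) := by
    rw [map_smul, inner_smul_left, map_mul]
    congr 1
    rw [← inner_conj_symm]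
    congr 1
    exact (hsym x y).symm
  rw [map_add, inner_add_left, inner_add_right, inner_add_right, h3]
  rw [map_smul, inner_smul_left, inner_smul_right, inner_smul_right, ← mul_assoc,
    RCLike.conj_mul, ← RCLike.ofReal_pow]
  simp only [map_add, RCLike.re_ofReal_mul, RCLike.conj_re]
  unfold ainner
  ring

end AuxLemmas

/-- `x ⊥_A^ε y` iff `x ⊥_{ε(A)} y`, i.e. `|⟨x, y⟩_A| ≤ ε‖x‖_A‖y‖_A` iff
`‖x + λy‖_A² ≥ ‖x‖_A² − 2ε‖x‖_A‖λy‖_A` for all scalars `λ`. -/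
theorem stmt_4 {𝕜 H : Type*} [RCLike 𝕜] [NormedAddCommGroup H] [InnerProductSpace 𝕜 H]
    [CompleteSpace H] (A : H →L[𝕜] H) (hA : A.IsPositive) (ε : ℝ) (hε0 : 0 ≤ ε) (hε1 : ε < 1)
    (x y : H) :
    ‖ainner A x y‖ ≤ ε * anorm A x * anorm A y ↔ VOrthEps A ε x y := by
  set a : 𝕜 := ainner A x y with ha
  set nx := anorm A x with hnx
  set ny := anorm A y with hny
  have hnx0 : 0 ≤ nx := Real.sqrt_nonneg _
  have hny0 : 0 ≤ ny := Real.sqrt_nonneg _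
  constructor
  · intro h l
    rw [anorm_add_sq' A hA l x y, anorm_smul', ← ha, ← hnx, ← hny]
    have h1 : -(‖l‖ * ‖a‖) ≤ RCLike.re (l * a) := by
      have := RCLike.abs_re_le_norm (l * a)
      have h2 : ‖l * a‖ = ‖l‖ * ‖a‖ := norm_mul l a
      rw [abs_le] at this
      linarith [this.1]
    have h2 : ‖l‖ * ‖a‖ ≤ ‖l‖ * (ε * nx * ny) :=
      mul_le_mul_of_nonneg_left h (norm_nonneg l)
    nlinarith [sq_nonneg (‖l‖ * ny), norm_nonneg l]
  · intro h
    by_cases haz : a = 0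
    · rw [haz, norm_zero]
      positivity
    have han : (0:ℝ) < ‖a‖ := norm_pos_iff.mpr haz
    have key : ∀ t : ℝ, 0 < t → ‖a‖ ≤ ε * nx * ny + t * ny ^ 2 / 2 := by
      intro t ht
      set l : 𝕜 := -(((t / ‖a‖ : ℝ) : 𝕜) * starRingEnd 𝕜 a) with hl
      have hln : ‖l‖ = t := by
        rw [hl, norm_neg, norm_mul, RCLike.norm_ofReal, RCLike.norm_conj,
          abs_of_pos (div_pos ht han)]
        field_simp
      have hla : RCLike.re (l * a) = -(t * ‖a‖) := by
        rw [hl, neg_mul, mul_assoc, RCLike.conj_mul]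
        simp only [← RCLike.ofReal_pow, ← RCLike.ofReal_mul, ← RCLike.ofReal_neg,
          RCLike.ofReal_re]
        field_simp
      have hineq := h l
      rw [anorm_add_sq' A hA l x y, anorm_smul', ← ha, ← hnx, ← hny, hln, hla] at hineq
      have h2t : 2 * t * ‖a‖ ≤ 2 * t * (ε * nx * ny + t * ny ^ 2 / 2) := by nlinarith
      exact le_of_mul_le_mul_left h2t (by linarith)
    by_cases hnyz : ny = 0
    · have := key 1 one_pos
      rw [hnyz] at this ⊢
      simpa using this
    · have hny' : 0 < ny ^ 2 := by positivity
      refine le_of_forall_pos_le_add fun δ hδ => ?_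
      have := key (2 * δ / ny ^ 2) (by positivity)
      calc ‖a‖ ≤ ε * nx * ny + (2 * δ / ny ^ 2) * ny ^ 2 / 2 := this
        _ = ε * nx * ny + δ := by field_simp
end

section
/- Let H be a real Hilbert space and A a positive operator on H. Let P be the orthogonal projection onto the closure of the range R(A), let A₀ be the restriction of A to the closure of R(A), and for an A-bounded operator C let C̃ = P∘C restricted to the closure of R(A). Then ‖C‖_A = ‖C̃‖_{A₀}, where ‖C̃‖_{A₀} = sup{‖C̃v‖_{A₀} : v ∈ closure of R(A), ‖v‖_{A₀} = 1} and ‖v‖_{A₀} = √⟨A₀v, v⟩. -/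
set_option linter.unusedSectionVars false

section helpers

variable {H : Type*} [NormedAddCommGroup H] [InnerProductSpace ℝ H] [CompleteSpace H]
variable {A : H →L[ℝ] H}

lemma ainner_symm' (hA : A.IsPositive) (x y : H) : (inner ℝ (A x) y : ℝ) = inner ℝ (A y) x := by
  exact ((hA.1) x y).trans
    (real_inner_comm (A y) x)

lemma ainner_self_nonneg (hA : A.IsPositive) (x : H) : (0:ℝ) ≤ inner ℝ (A x) x := by simpa using hA.re_inner_nonneg_left x

lemma anorm_eq (x : H) : anorm A x = Real.sqrt (inner ℝ (A x) x : ℝ) := by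
  simp [anorm]

lemma anorm_nonneg (x : H) : 0 ≤ anorm A x := Real.sqrt_nonneg _

lemma anorm_sq (hA : A.IsPositive) (x : H) : anorm A x ^ 2 = (inner ℝ (A x) x : ℝ) := by
  rw [anorm_eq, Real.sq_sqrt (ainner_self_nonneg hA x)]

lemma ainner_expand (hA : A.IsPositive) (x y : H) (t : ℝ) :
    (inner ℝ (A (x + t • y)) (x + t • y) : ℝ)
      = (inner ℝ (A x) x : ℝ) + 2 * t * inner ℝ (A x) y + t * t * inner ℝ (A y) y := by
  rw [map_add, map_smul]
  simp only [inner_add_left, inner_add_right, real_inner_smul_left, real_inner_smul_right]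
  rw [ainner_symm' hA y x]
  ring

lemma acs (hA : A.IsPositive) (x y : H) :
    (inner ℝ (A x) y : ℝ) ^ 2 ≤ (inner ℝ (A x) x : ℝ) * (inner ℝ (A y) y : ℝ) := by
  have h : ∀ t : ℝ, 0 ≤ (inner ℝ (A y) y : ℝ) * (t * t) + (2 * inner ℝ (A x) y) * t
      + (inner ℝ (A x) x : ℝ) := by
    intro t
    have h0 : (0:ℝ) ≤ inner ℝ (A (x + t • y)) (x + t • y) := ainner_self_nonneg hA _
    rw [ainner_expand hA x y t] at h0
    nlinarith [h0]
  have := discrim_le_zero h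
  rw [discrim] at this
  nlinarith [this]

lemma ainner_le (hA : A.IsPositive) (x y : H) :
    (inner ℝ (A x) y : ℝ) ≤ anorm A x * anorm A y := by
  have h := acs hA x y
  calc (inner ℝ (A x) y : ℝ) ≤ |(inner ℝ (A x) y : ℝ)| := le_abs_self _
    _ = Real.sqrt ((inner ℝ (A x) y : ℝ)^2) := (Real.sqrt_sq_eq_abs _).symm
    _ ≤ Real.sqrt ((inner ℝ (A x) x : ℝ) * (inner ℝ (A y) y : ℝ)) := Real.sqrt_le_sqrt h
    _ = anorm A x * anorm A y := by
        rw [anorm_eq, anorm_eq, Real.sqrt_mul (ainner_self_nonneg hA x)]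

lemma anorm_add_le (hA : A.IsPositive) (x y : H) :
    anorm A (x + y) ≤ anorm A x + anorm A y := by
  have hexp : (inner ℝ (A (x + y)) (x + y) : ℝ)
      = (inner ℝ (A x) x : ℝ) + 2 * inner ℝ (A x) y + inner ℝ (A y) y := by
    have := ainner_expand hA x y 1
    simpa using this
  rw [anorm_eq, hexp]
  have hle : (inner ℝ (A x) x : ℝ) + 2 * inner ℝ (A x) y + inner ℝ (A y) y
      ≤ (anorm A x + anorm A y)^2 := by
    have h1 := ainner_le hA x y
    have hx := anorm_sq hA x
    have hy := anorm_sq hA y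
    nlinarith
  calc Real.sqrt ((inner ℝ (A x) x : ℝ) + 2 * inner ℝ (A x) y + inner ℝ (A y) y)
      ≤ Real.sqrt ((anorm A x + anorm A y)^2) := Real.sqrt_le_sqrt hle
    _ = anorm A x + anorm A y := Real.sqrt_sq (add_nonneg (anorm_nonneg x) (anorm_nonneg y))

lemma anorm_neg (x : H) : anorm A (-x) = anorm A x := by
  simp [anorm_eq]

lemma anorm_add_right_of_zero (hA : A.IsPositive) {w : H} (hw : anorm A w = 0) (x : H) :
    anorm A (x + w) = anorm A x := by
  refine le_antisymm ?_ ?_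
  · have := anorm_add_le hA x w; rw [hw] at this; linarith
  · have h := anorm_add_le hA (x + w) (-w)
    rw [anorm_neg, hw] at h
    simpa using h

lemma orth_anorm_zero (hA : A.IsPositive)
    {w : H} (hw : w ∈ ((LinearMap.range (A : H →ₗ[ℝ] H)).topologicalClosure)ᗮ) :
    anorm A w = 0 := by
  have hAw : A w ∈ (LinearMap.range (A : H →ₗ[ℝ] H)).topologicalClosure :=
    Submodule.le_topologicalClosure _ (LinearMap.mem_range_self _ w)
  have h0 : (inner ℝ (A w) w : ℝ) = 0 :=
    (Submodule.mem_orthogonal _ w).mp hw (A w) hAw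
  rw [anorm_eq, h0, Real.sqrt_zero]

end helpers
/-- if `P` is the orthogonal projection onto the closure of `R(A)` (characterized by
`P x ∈ closure R(A)` and `x − P x ⊥ closure R(A)`), and `C̃ = P∘C` restricted to the closure of
`R(A)`, then `‖C‖_A = ‖C̃‖_{A₀} = sup {‖P(Cv)‖_A : v ∈ closure R(A), ‖v‖_A = 1}`. -/
theorem stmt_6 {H : Type*} [NormedAddCommGroup H] [InnerProductSpace ℝ H] [CompleteSpace H]
    (A C P : H →L[ℝ] H) (hA : A.IsPositive) (hC : IsABounded A C)
    (hPmem : ∀ x : H, P x ∈ (LinearMap.range (A : H →ₗ[ℝ] H)).topologicalClosure)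
    (hPorth : ∀ x : H, x - P x ∈ ((LinearMap.range (A : H →ₗ[ℝ] H)).topologicalClosure)ᗮ) :
    opAnorm A C =
      sSup {r : ℝ | ∃ v ∈ (LinearMap.range (A : H →ₗ[ℝ] H)).topologicalClosure,
        anorm A v = 1 ∧ r = anorm A (P (C v))} := by
  obtain ⟨c, hc, hCb⟩ := hC
  -- key: anorm A (x - P x) = 0
  have hres : ∀ x : H, anorm A (x - P x) = 0 := fun x => orth_anorm_zero hA (hPorth x)
  have hPx : ∀ x : H, anorm A (P x) = anorm A x := by
    intro x
    have : anorm A (P x + (x - P x)) = anorm A (P x) :=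
      anorm_add_right_of_zero hA (hres x) (P x)
    simpa using this.symm
  have hCres : ∀ x : H, anorm A (C (x - P x)) = 0 := by
    intro x
    have h1 := hCb (x - P x)
    rw [hres x, mul_zero] at h1
    exact le_antisymm h1 (anorm_nonneg _)
  have hCP : ∀ x : H, anorm A (C (P x)) = anorm A (C x) := by
    intro x
    have : anorm A (C (P x) + C (x - P x)) = anorm A (C (P x)) :=
      anorm_add_right_of_zero hA (hCres x) _
    rw [← map_add] at this
    simpa using this.symm
  have hset : {r : ℝ | ∃ x : H, anorm A x = 1 ∧ r = anorm A (C x)} =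
      {r : ℝ | ∃ v ∈ (LinearMap.range (A : H →ₗ[ℝ] H)).topologicalClosure,
        anorm A v = 1 ∧ r = anorm A (P (C v))} := by
    ext r
    constructor
    · rintro ⟨x, hx1, rfl⟩
      exact ⟨P x, hPmem x, by rw [hPx x, hx1],
        by rw [hPx (C (P x)), hCP x]⟩
    · rintro ⟨v, _, hv1, rfl⟩
      exact ⟨v, hv1, by rw [hPx (C v)]⟩
  rw [opAnorm, hset]
end

section
/- Let H be a real Hilbert space, A a positive operator on H, and C an A-bounded operator on H. If M_A^C ∩ closure(R(A)) = S_{H(A)} ∩ closure(R(A)), where R(A) is the range of A, then M_A^C = S_{H(A)}. -/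
section aux

variable {H : Type*} [NormedAddCommGroup H] [InnerProductSpace ℝ H] [CompleteSpace H]

omit [CompleteSpace H] in
lemma anorm_real_def (A : H →L[ℝ] H) (x : H) :
    anorm A x = Real.sqrt (inner ℝ (A x) x : ℝ) := rfl

lemma key_inner_eq_zero (A : H →L[ℝ] H) (hA : A.IsPositive) {w : H}
    (hw : (inner ℝ (A w) w : ℝ) = 0) (u : H) : (inner ℝ (A u) w : ℝ) = 0 := by
  have hsym : ∀ y z : H, (inner ℝ (A y) z : ℝ) = inner ℝ y (A z) :=
    fun y z => hA.isSelfAdjoint.isSymmetric y z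
  by_contra ha
  set a : ℝ := inner ℝ (A u) w with haa
  set b : ℝ := (inner ℝ (A u) u : ℝ) with hbb
  have hb : 0 ≤ b := by simpa using hA.inner_nonneg_left u
  set t : ℝ := -(b + 1) / (2 * a) with ht
  have h1 : (inner ℝ (A w) u : ℝ) = a := by
    rw [hsym w u, real_inner_comm]
  have hexp : (inner ℝ (A (u + t • w)) (u + t • w) : ℝ) = b + 2 * t * a := by
    simp only [map_add, map_smul, inner_add_left, inner_add_right, real_inner_smul_left,
      real_inner_smul_right, h1, hw, ← haa, ← hbb]
    ring
  have hpos : 0 ≤ (inner ℝ (A (u + t • w)) (u + t • w) : ℝ) := by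
    simpa using hA.inner_nonneg_left (u + t • w)
  rw [hexp] at hpos
  have h2 : 2 * t * a = -(b + 1) := by
    rw [ht]; field_simp
  linarith

end aux

/-- if `M_A^C ∩ closure(R(A)) = S_{H(A)} ∩ closure(R(A))` then `M_A^C = S_{H(A)}`. -/
theorem stmt_7 {H : Type*} [NormedAddCommGroup H] [InnerProductSpace ℝ H] [CompleteSpace H]
    (A C : H →L[ℝ] H) (hA : A.IsPositive) (hC : IsABounded A C)
    (h : {x : H | anorm A x = 1 ∧ anorm A (C x) = opAnorm A C} ∩
          ((LinearMap.range (A : H →ₗ[ℝ] H)).topologicalClosure : Set H) =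
        {x : H | anorm A x = 1} ∩
          ((LinearMap.range (A : H →ₗ[ℝ] H)).topologicalClosure : Set H)) :
    {x : H | anorm A x = 1 ∧ anorm A (C x) = opAnorm A C} = {x : H | anorm A x = 1} := by
  have hsym : ∀ y z : H, (inner ℝ (A y) z : ℝ) = inner ℝ y (A z) :=
    fun y z => hA.isSelfAdjoint.isSymmetric y z
  ext x
  simp only [Set.mem_setOf_eq]
  refine ⟨fun hx => hx.1, fun hx1 => ⟨hx1, ?_⟩⟩
  set K := (LinearMap.range (A : H →ₗ[ℝ] H)).topologicalClosure with hK
  haveI : CompleteSpace K := (LinearMap.range (A : H →ₗ[ℝ] H)).isClosed_topologicalClosure.completeSpace_coe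
  set x₁ : H := (K.orthogonalProjectionOnto x : H) with hx₁
  have hx₁K : x₁ ∈ K := (K.orthogonalProjectionOnto x).2
  have hdK : x - x₁ ∈ Kᗮ := K.sub_starProjection_mem_orthogonal x
  set d := x - x₁ with hd
  have hrange : ∀ y : H, A y ∈ K :=
    fun y => Submodule.le_topologicalClosure _ (LinearMap.mem_range_self _ y)
  have hAd : A d = 0 := by
    have h2 : (inner ℝ (A d) (A d) : ℝ) = 0 := by
      rw [hsym d (A d), real_inner_comm]
      exact hdK _ (hrange (A d))
    exact inner_self_eq_zero.mp h2
  have hxd : x = x₁ + d := by rw [hd]; abel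
  have hAx₁d : (inner ℝ (A x₁) d : ℝ) = 0 := by rw [hsym x₁ d, hAd]; simp
  have hinner : (inner ℝ (A x) x : ℝ) = inner ℝ (A x₁) x₁ := by
    rw [hxd]
    simp [map_add, hAd, inner_add_left, inner_add_right, hAx₁d]
  have hx₁1 : anorm A x₁ = 1 := by
    rw [anorm_real_def] at hx1 ⊢
    rw [← hinner]; exact hx1
  have hx₁M : x₁ ∈ {x : H | anorm A x = 1 ∧ anorm A (C x) = opAnorm A C} := by
    have : x₁ ∈ ({x : H | anorm A x = 1} ∩ (K : Set H)) := ⟨hx₁1, hx₁K⟩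
    rw [← h] at this
    exact this.1
  -- now transfer from C x₁ to C x
  obtain ⟨c, hc, hbound⟩ := hC
  have hCd0 : (inner ℝ (A (C d)) (C d) : ℝ) = 0 := by
    have h4 : anorm A (C d) ≤ 0 := by
      have := hbound d
      rw [anorm_real_def A d] at this
      simpa [inner_self_eq_zero, hAd] using this
    have h5 : 0 ≤ (inner ℝ (A (C d)) (C d) : ℝ) := by
      simpa using hA.inner_nonneg_left (C d)
    have h6 : anorm A (C d) = 0 := le_antisymm h4 (Real.sqrt_nonneg _)
    rw [anorm_real_def] at h6
    nlinarith [Real.sq_sqrt h5, h6]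
  have hACx₁Cd : (inner ℝ (A (C x₁)) (C d) : ℝ) = 0 :=
    key_inner_eq_zero A hA hCd0 (C x₁)
  have hCinner : (inner ℝ (A (C x)) (C x) : ℝ) = inner ℝ (A (C x₁)) (C x₁) := by
    have hCx : C x = C x₁ + C d := by rw [hxd, map_add]
    have hCdx₁ : (inner ℝ (A (C d)) (C x₁) : ℝ) = inner ℝ (A (C x₁)) (C d) := by
      rw [hsym (C d) (C x₁), real_inner_comm]
    rw [hCx]
    simp [map_add, inner_add_left, inner_add_right, hACx₁Cd, hCdx₁, hCd0]
  rw [anorm_real_def, hCinner, ← anorm_real_def]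
  exact hx₁M.2
end
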